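/- Let R = {r_1,…,r_n} and D = {d_1,…,d_n} be n i.i.d. uniform points each on [0,ℓ]. There exist constants C₁ ≥ C₂ > 0 such that for all n ≥ 1, C₂·ℓ·√n ≤ E[min over perfect matchings M of ∑_{(r,d)∈M} |r−d|] ≤ C₁·ℓ·√n. -/

import Mathlib

open MeasureTheory

/-- The uniform probability measure on `[0, ℓ]`. -/
noncomputable def unif (ℓ : ℝ) : Measure ℝ :=
  (ENNReal.ofReal ℓ)⁻¹ • volume.restrict (Set.Icc 0 ℓ)

open Set



lemma integrable_of_bdd' {Ω' : Type*} [MeasurableSpace Ω'] {μ' : Measure Ω'}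
    [IsFiniteMeasure μ'] {f : Ω' → ℝ} (hm : AEStronglyMeasurable f μ') {C : ℝ}
    (h : ∀ x, |f x| ≤ C) : Integrable f μ' :=
  (integrable_const C).mono' hm (Filter.Eventually.of_forall fun x => by
    simpa [Real.norm_eq_abs] using h x)

section aux
variable {Ω : Type*} [MeasurableSpace Ω] {μ : Measure Ω} [IsProbabilityMeasure μ]

lemma integrable_of_bdd {f : Ω → ℝ} (hm : AEStronglyMeasurable f μ) {C : ℝ}
    (h : ∀ x, |f x| ≤ C) : Integrable f μ :=
  (integrable_const C).mono' hm (Filter.Eventually.of_forall fun x => by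
    simpa [Real.norm_eq_abs] using h x)

lemma cs_integral {f g : Ω → ℝ} (hfg : Integrable (fun x => f x * g x) μ)
    (hf : Integrable (fun x => f x ^ 2) μ) (hg : Integrable (fun x => g x ^ 2) μ) :
    (∫ x, f x * g x ∂μ) ^ 2 ≤ (∫ x, f x ^ 2 ∂μ) * ∫ x, g x ^ 2 ∂μ := by
  rcases eq_or_ne (∫ x, g x ^ 2 ∂μ) 0 with h0 | h0
  · have hz : (fun x => g x ^ 2) =ᵐ[μ] 0 :=
      (integral_eq_zero_iff_of_nonneg (fun x => sq_nonneg _) hg).mp h0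
    have hz' : (fun x => f x * g x) =ᵐ[μ] 0 := by
      filter_upwards [hz] with x hx
      have : g x = 0 := by
        have := hx
        simpa [pow_eq_zero_iff] using hx
      simp [this]
    rw [integral_congr_ae hz', h0]
    simp
  · have hg0 : 0 < ∫ x, g x ^ 2 ∂μ :=
      lt_of_le_of_ne (integral_nonneg fun x => sq_nonneg _) (Ne.symm h0)
    set l : ℝ := (∫ x, f x * g x ∂μ) / (∫ x, g x ^ 2 ∂μ) with hl
    have key : 0 ≤ ∫ x, (f x - l * g x) ^ 2 ∂μ := integral_nonneg fun x => sq_nonneg _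
    have expand : ∫ x, (f x - l * g x) ^ 2 ∂μ
        = (∫ x, f x ^ 2 ∂μ) - 2 * l * (∫ x, f x * g x ∂μ) + l ^ 2 * ∫ x, g x ^ 2 ∂μ := by
      have : ∀ x, (f x - l * g x) ^ 2
          = f x ^ 2 - (2 * l) * (f x * g x) + l ^ 2 * g x ^ 2 := fun x => by ring
      simp_rw [this]
      rw [integral_add (by exact (hf.sub (hfg.const_mul _))) (hg.const_mul _),
        integral_sub hf (hfg.const_mul _), integral_const_mul, integral_const_mul]
    rw [expand, hl] at key
    set I := ∫ x, f x * g x ∂μ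
    set F := ∫ x, f x ^ 2 ∂μ
    set G := ∫ x, g x ^ 2 ∂μ
    have e2 : (I / G) ^ 2 * G = I ^ 2 / G := by field_simp
    have e1 : 2 * (I / G) * I = 2 * (I ^ 2 / G) := by ring
    rw [e1, e2] at key
    have h3 : I ^ 2 / G ≤ F := by linarith
    calc I ^ 2 = (I ^ 2 / G) * G := by field_simp
    _ ≤ F * G := mul_le_mul_of_nonneg_right h3 hg0.le

end aux


section moments

variable {ν : Measure ℝ} [IsProbabilityMeasure ν]

lemma pi_succ_integral (n : ℕ) (F : (Fin (n + 1) → ℝ) → ℝ) :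
    ∫ x, F x ∂(Measure.pi fun _ : Fin (n + 1) => ν)
      = ∫ z : ℝ × (Fin n → ℝ), F (Fin.cons z.1 z.2)
          ∂(ν.prod (Measure.pi fun _ : Fin n => ν)) := by
  have h := measurePreserving_piFinSuccAbove (fun _ : Fin (n + 1) => ν) 0
  rw [← ((h.symm _).integral_comp' (fun z => F z))]
  congr 1
  ext z
  congr 1
  exact Fin.insertNth_zero' z.1 z.2

/-- centered partial sum -/
noncomputable def Wsum (g : ℝ → ℝ) (n : ℕ) (x : Fin n → ℝ) : ℝ := ∑ i, g (x i)

lemma Wsum_meas {g : ℝ → ℝ} (hgm : Measurable g) (n : ℕ) : Measurable (Wsum g n) :=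
  Finset.measurable_sum _ fun i _ => hgm.comp (measurable_pi_apply i)

lemma Wsum_bdd {g : ℝ → ℝ} {c : ℝ} (hgb : ∀ u, |g u| ≤ c) (n : ℕ) (x : Fin n → ℝ) :
    |Wsum g n x| ≤ n * c := by
  calc |Wsum g n x| ≤ ∑ i : Fin n, |g (x i)| := Finset.abs_sum_le_sum_abs _ _
  _ ≤ ∑ _i : Fin n, c := Finset.sum_le_sum fun i _ => hgb (x i)
  _ = n * c := by simp [mul_comm]

lemma Wsum_pow_int {g : ℝ → ℝ} {c : ℝ} (hgm : Measurable g) (hgb : ∀ u, |g u| ≤ c)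
    (n k : ℕ) :
    Integrable (fun x => Wsum g n x ^ k) (Measure.pi fun _ : Fin n => ν) := by
  refine (integrable_const (((n : ℝ) * c) ^ k)).mono'
    ((Wsum_meas hgm n).pow_const k).aestronglyMeasurable
    (Filter.Eventually.of_forall fun x => ?_)
  rw [Real.norm_eq_abs, abs_pow]
  exact pow_le_pow_left₀ (abs_nonneg _) (Wsum_bdd hgb n x) k

lemma g_pow_int {g : ℝ → ℝ} {c : ℝ} (hgm : Measurable g) (hgb : ∀ u, |g u| ≤ c) (k : ℕ) :
    Integrable (fun u => g u ^ k) ν := by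
  refine (integrable_const (c ^ k)).mono' (hgm.pow_const k).aestronglyMeasurable
    (Filter.Eventually.of_forall fun u => ?_)
  rw [Real.norm_eq_abs, abs_pow]
  exact pow_le_pow_left₀ (abs_nonneg _) (hgb u) k

lemma Wsum_succ (g : ℝ → ℝ) (n : ℕ) (z : ℝ × (Fin n → ℝ)) :
    Wsum g (n + 1) (Fin.cons z.1 z.2) = g z.1 + Wsum g n z.2 := by
  simp [Wsum, Fin.sum_univ_succ]

lemma prod_int_pow {g : ℝ → ℝ} (n j k : ℕ) :
    ∫ z : ℝ × (Fin n → ℝ), g z.1 ^ j * Wsum g n z.2 ^ k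
        ∂(ν.prod (Measure.pi fun _ : Fin n => ν))
      = (∫ u, g u ^ j ∂ν) * ∫ x, Wsum g n x ^ k ∂(Measure.pi fun _ : Fin n => ν) :=
  integral_prod_mul (fun u => g u ^ j) (fun x => Wsum g n x ^ k)

lemma int_add3 {Ω : Type*} [MeasurableSpace Ω] {μ : Measure Ω} {f1 f2 f3 : Ω → ℝ}
    (h1 : Integrable f1 μ) (h2 : Integrable f2 μ) (h3 : Integrable f3 μ) :
    ∫ z, (f1 z + f2 z + f3 z) ∂μ = (∫ z, f1 z ∂μ) + (∫ z, f2 z ∂μ) + ∫ z, f3 z ∂μ := by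
  rw [integral_add (show Integrable (fun z => f1 z + f2 z) μ from h1.add h2) h3,
    integral_add h1 h2]

lemma int_add5 {Ω : Type*} [MeasurableSpace Ω] {μ : Measure Ω} {f1 f2 f3 f4 f5 : Ω → ℝ}
    (h1 : Integrable f1 μ) (h2 : Integrable f2 μ) (h3 : Integrable f3 μ)
    (h4 : Integrable f4 μ) (h5 : Integrable f5 μ) :
    ∫ z, (f1 z + f2 z + f3 z + f4 z + f5 z) ∂μ
      = (∫ z, f1 z ∂μ) + (∫ z, f2 z ∂μ) + (∫ z, f3 z ∂μ) + (∫ z, f4 z ∂μ) + ∫ z, f5 z ∂μ := by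
  rw [integral_add (show Integrable (fun z => f1 z + f2 z + f3 z + f4 z) μ from
      ((h1.add h2).add h3).add h4) h5,
    integral_add (show Integrable (fun z => f1 z + f2 z + f3 z) μ from (h1.add h2).add h3) h4,
    integral_add (show Integrable (fun z => f1 z + f2 z) μ from h1.add h2) h3,
    integral_add h1 h2]

lemma prod_int_pow_integrable {g : ℝ → ℝ} {c : ℝ} (hgm : Measurable g)
    (hgb : ∀ u, |g u| ≤ c) (n j k : ℕ) :
    Integrable (fun z : ℝ × (Fin n → ℝ) => g z.1 ^ j * Wsum g n z.2 ^ k)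
      (ν.prod (Measure.pi fun _ : Fin n => ν)) :=
  (g_pow_int hgm hgb j).mul_prod (Wsum_pow_int hgm hgb n k)

lemma moment1 {g : ℝ → ℝ} {c : ℝ} (hgm : Measurable g) (hgb : ∀ u, |g u| ≤ c)
    (hg0 : ∫ u, g u ∂ν = 0) (n : ℕ) :
    ∫ x, Wsum g n x ∂(Measure.pi fun _ : Fin n => ν) = 0 := by
  induction n with
  | zero => simp [Wsum]
  | succ n ih =>
    rw [pi_succ_integral (ν := ν) n (fun x => Wsum g (n + 1) x)]
    have hpt : ∀ z : ℝ × (Fin n → ℝ), Wsum g (n + 1) (Fin.cons z.1 z.2)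
        = g z.1 ^ 1 * Wsum g n z.2 ^ 0 + g z.1 ^ 0 * Wsum g n z.2 ^ 1 := by
      intro z; rw [Wsum_succ]; ring
    simp_rw [hpt]
    rw [integral_add (prod_int_pow_integrable hgm hgb n 1 0)
      (prod_int_pow_integrable hgm hgb n 0 1), prod_int_pow, prod_int_pow]
    simp [hg0, ih]

lemma moment2 {g : ℝ → ℝ} {c : ℝ} (hgm : Measurable g) (hgb : ∀ u, |g u| ≤ c)
    (hg0 : ∫ u, g u ∂ν = 0) (n : ℕ) :
    ∫ x, Wsum g n x ^ 2 ∂(Measure.pi fun _ : Fin n => ν)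
      = n * ∫ u, g u ^ 2 ∂ν := by
  induction n with
  | zero => simp [Wsum]
  | succ n ih =>
    rw [pi_succ_integral (ν := ν) n (fun x => Wsum g (n + 1) x ^ 2)]
    have hpt : ∀ z : ℝ × (Fin n → ℝ), Wsum g (n + 1) (Fin.cons z.1 z.2) ^ 2
        = g z.1 ^ 2 * Wsum g n z.2 ^ 0
          + 2 * (g z.1 ^ 1 * Wsum g n z.2 ^ 1) + g z.1 ^ 0 * Wsum g n z.2 ^ 2 := by
      intro z; rw [Wsum_succ]; ring
    simp_rw [hpt]
    rw [int_add3 (prod_int_pow_integrable hgm hgb n 2 0)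
        ((prod_int_pow_integrable hgm hgb n 1 1).const_mul 2)
        (prod_int_pow_integrable hgm hgb n 0 2),
      integral_const_mul, prod_int_pow, prod_int_pow, prod_int_pow]
    have hW0 : ∫ x, Wsum g n x ^ 0 ∂(Measure.pi fun _ : Fin n => ν) = 1 := by simp
    have hg0' : ∫ u, g u ^ 1 ∂ν = 0 := by simpa using hg0
    have hg00 : ∫ u, g u ^ 0 ∂ν = 1 := by simp
    rw [hW0, hg0', ih, hg00]
    push_cast
    ring

lemma moment4 {g : ℝ → ℝ} {c : ℝ} (hgm : Measurable g) (hgb : ∀ u, |g u| ≤ c)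
    (hg0 : ∫ u, g u ∂ν = 0) (n : ℕ) :
    ∫ x, Wsum g n x ^ 4 ∂(Measure.pi fun _ : Fin n => ν)
      = n * (∫ u, g u ^ 4 ∂ν) + 3 * n * (n - 1) * (∫ u, g u ^ 2 ∂ν) ^ 2 := by
  induction n with
  | zero => simp [Wsum]
  | succ n ih =>
    rw [pi_succ_integral (ν := ν) n (fun x => Wsum g (n + 1) x ^ 4)]
    have hpt : ∀ z : ℝ × (Fin n → ℝ), Wsum g (n + 1) (Fin.cons z.1 z.2) ^ 4
        = g z.1 ^ 4 * Wsum g n z.2 ^ 0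
          + 4 * (g z.1 ^ 3 * Wsum g n z.2 ^ 1)
          + 6 * (g z.1 ^ 2 * Wsum g n z.2 ^ 2)
          + 4 * (g z.1 ^ 1 * Wsum g n z.2 ^ 3)
          + g z.1 ^ 0 * Wsum g n z.2 ^ 4 := by
      intro z; rw [Wsum_succ]; ring
    simp_rw [hpt]
    rw [int_add5 (prod_int_pow_integrable hgm hgb n 4 0)
        ((prod_int_pow_integrable hgm hgb n 3 1).const_mul 4)
        ((prod_int_pow_integrable hgm hgb n 2 2).const_mul 6)
        ((prod_int_pow_integrable hgm hgb n 1 3).const_mul 4)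
        (prod_int_pow_integrable hgm hgb n 0 4),
      integral_const_mul, integral_const_mul, integral_const_mul,
      prod_int_pow, prod_int_pow, prod_int_pow, prod_int_pow, prod_int_pow]
    have hW0 : ∫ x, Wsum g n x ^ 0 ∂(Measure.pi fun _ : Fin n => ν) = 1 := by simp
    have hg1 : ∫ u, g u ^ 1 ∂ν = 0 := by simpa using hg0
    have hW1 : ∫ x, Wsum g n x ^ 1 ∂(Measure.pi fun _ : Fin n => ν) = 0 := by
      simpa using moment1 hgm hgb hg0 n
    have hg00 : ∫ u, g u ^ 0 ∂ν = 1 := by simp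
    rw [hW0, hg1, hW1, hg00, ih, moment2 hgm hgb hg0 n]
    push_cast
    ring

end moments

section dsum

variable {ν : Measure ℝ} [IsProbabilityMeasure ν]

/-- difference of the two centered sums -/
noncomputable def Dsum (g : ℝ → ℝ) (n : ℕ) (ω : (Fin n → ℝ) × (Fin n → ℝ)) : ℝ :=
  Wsum g n ω.1 - Wsum g n ω.2

lemma Dsum_meas {g : ℝ → ℝ} (hgm : Measurable g) (n : ℕ) : Measurable (Dsum g n) :=
  ((Wsum_meas hgm n).comp measurable_fst).sub ((Wsum_meas hgm n).comp measurable_snd)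

lemma Dsum_bdd {g : ℝ → ℝ} {c : ℝ} (hgb : ∀ u, |g u| ≤ c) (n : ℕ)
    (ω : (Fin n → ℝ) × (Fin n → ℝ)) : |Dsum g n ω| ≤ 2 * (n * c) := by
  calc |Dsum g n ω| ≤ |Wsum g n ω.1| + |Wsum g n ω.2| := abs_sub _ _
  _ ≤ n * c + n * c := add_le_add (Wsum_bdd hgb n _) (Wsum_bdd hgb n _)
  _ = 2 * (n * c) := by ring

lemma WW_int {g : ℝ → ℝ} {c : ℝ} (hgm : Measurable g) (hgb : ∀ u, |g u| ≤ c) (n j k : ℕ) :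
    Integrable (fun ω : (Fin n → ℝ) × (Fin n → ℝ) => Wsum g n ω.1 ^ j * Wsum g n ω.2 ^ k)
      ((Measure.pi fun _ : Fin n => ν).prod (Measure.pi fun _ : Fin n => ν)) :=
  (Wsum_pow_int hgm hgb n j).mul_prod (Wsum_pow_int hgm hgb n k)

lemma WW_eval {g : ℝ → ℝ} (n j k : ℕ) :
    ∫ ω : (Fin n → ℝ) × (Fin n → ℝ), Wsum g n ω.1 ^ j * Wsum g n ω.2 ^ k
        ∂((Measure.pi fun _ : Fin n => ν).prod (Measure.pi fun _ : Fin n => ν))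
      = (∫ x, Wsum g n x ^ j ∂(Measure.pi fun _ : Fin n => ν))
        * ∫ x, Wsum g n x ^ k ∂(Measure.pi fun _ : Fin n => ν) :=
  integral_prod_mul (fun x => Wsum g n x ^ j) (fun x => Wsum g n x ^ k)

lemma Dsum_sq {g : ℝ → ℝ} {c : ℝ} (hgm : Measurable g) (hgb : ∀ u, |g u| ≤ c)
    (hg0 : ∫ u, g u ∂ν = 0) (n : ℕ) :
    ∫ ω, Dsum g n ω ^ 2
        ∂((Measure.pi fun _ : Fin n => ν).prod (Measure.pi fun _ : Fin n => ν))
      = 2 * n * ∫ u, g u ^ 2 ∂ν := by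
  have hpt : ∀ ω : (Fin n → ℝ) × (Fin n → ℝ), Dsum g n ω ^ 2
      = Wsum g n ω.1 ^ 2 * Wsum g n ω.2 ^ 0
        + (-2) * (Wsum g n ω.1 ^ 1 * Wsum g n ω.2 ^ 1)
        + Wsum g n ω.1 ^ 0 * Wsum g n ω.2 ^ 2 := by
    intro ω; rw [Dsum]; ring
  simp_rw [hpt]
  rw [int_add3 (WW_int hgm hgb n 2 0) ((WW_int hgm hgb n 1 1).const_mul (-2))
    (WW_int hgm hgb n 0 2), integral_const_mul, WW_eval, WW_eval, WW_eval]
  have h1 : ∫ x, Wsum g n x ^ 1 ∂(Measure.pi fun _ : Fin n => ν) = 0 := by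
    simpa using moment1 hgm hgb hg0 n
  have h0 : ∫ x, Wsum g n x ^ 0 ∂(Measure.pi fun _ : Fin n => ν) = 1 := by simp
  rw [h1, h0, moment2 hgm hgb hg0 n]
  ring

lemma Dsum_four {g : ℝ → ℝ} {c : ℝ} (hgm : Measurable g) (hgb : ∀ u, |g u| ≤ c)
    (hg0 : ∫ u, g u ∂ν = 0) (n : ℕ) :
    ∫ ω, Dsum g n ω ^ 4
        ∂((Measure.pi fun _ : Fin n => ν).prod (Measure.pi fun _ : Fin n => ν))
      = 2 * (n * (∫ u, g u ^ 4 ∂ν) + 3 * n * (n - 1) * (∫ u, g u ^ 2 ∂ν) ^ 2)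
        + 6 * (n * ∫ u, g u ^ 2 ∂ν) ^ 2 := by
  have hpt : ∀ ω : (Fin n → ℝ) × (Fin n → ℝ), Dsum g n ω ^ 4
      = Wsum g n ω.1 ^ 4 * Wsum g n ω.2 ^ 0
        + (-4) * (Wsum g n ω.1 ^ 3 * Wsum g n ω.2 ^ 1)
        + 6 * (Wsum g n ω.1 ^ 2 * Wsum g n ω.2 ^ 2)
        + (-4) * (Wsum g n ω.1 ^ 1 * Wsum g n ω.2 ^ 3)
        + Wsum g n ω.1 ^ 0 * Wsum g n ω.2 ^ 4 := by
    intro ω; rw [Dsum]; ring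
  simp_rw [hpt]
  rw [int_add5 (WW_int hgm hgb n 4 0) ((WW_int hgm hgb n 3 1).const_mul (-4))
    ((WW_int hgm hgb n 2 2).const_mul 6) ((WW_int hgm hgb n 1 3).const_mul (-4))
    (WW_int hgm hgb n 0 4),
    integral_const_mul, integral_const_mul, integral_const_mul,
    WW_eval, WW_eval, WW_eval, WW_eval, WW_eval]
  have h1 : ∫ x, Wsum g n x ^ 1 ∂(Measure.pi fun _ : Fin n => ν) = 0 := by
    simpa using moment1 hgm hgb hg0 n
  have h0 : ∫ x, Wsum g n x ^ 0 ∂(Measure.pi fun _ : Fin n => ν) = 1 := by simp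
  rw [h1, h0, moment2 hgm hgb hg0 n, moment4 hgm hgb hg0 n]
  ring

end dsum

section unifsec

variable {ℓ : ℝ}

lemma unif_prob (hℓ : 0 < ℓ) : IsProbabilityMeasure (unif ℓ) := by
  constructor
  rw [unif, Measure.smul_apply, Measure.restrict_apply MeasurableSet.univ,
    Set.univ_inter, Real.volume_Icc, smul_eq_mul, sub_zero,
    ENNReal.inv_mul_cancel (by simp [hℓ]) ENNReal.ofReal_ne_top]

lemma unif_integral (hℓ : 0 < ℓ) (f : ℝ → ℝ) :
    ∫ u, f u ∂(unif ℓ) = ℓ⁻¹ * ∫ u in Set.Icc 0 ℓ, f u := by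
  rw [unif, integral_smul_measure, ENNReal.toReal_inv, ENNReal.toReal_ofReal hℓ.le,
    smul_eq_mul]

/-- clamped centered identity function -/
noncomputable def gcl (ℓ : ℝ) (u : ℝ) : ℝ := min (max u 0) ℓ - ℓ / 2

lemma gcl_meas : Measurable (gcl ℓ) :=
  (((measurable_id.max measurable_const).min measurable_const).sub measurable_const)

lemma gcl_bdd (hℓ : 0 < ℓ) (u : ℝ) : |gcl ℓ u| ≤ ℓ / 2 := by
  rw [gcl, abs_le]
  constructor
  · have : (0:ℝ) ≤ min (max u 0) ℓ := le_min (le_max_right u 0) hℓ.le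
    linarith
  · have : min (max u 0) ℓ ≤ ℓ := min_le_right _ _
    linarith

lemma gcl_pow_integral (hℓ : 0 < ℓ) (k : ℕ) :
    ∫ u, gcl ℓ u ^ k ∂(unif ℓ)
      = ℓ⁻¹ * ((ℓ / 2) ^ (k + 1) - (-(ℓ / 2)) ^ (k + 1)) / (k + 1) := by
  rw [unif_integral hℓ]
  have hcong : ∫ u in Set.Icc 0 ℓ, gcl ℓ u ^ k
      = ∫ u in Set.Icc 0 ℓ, (u - ℓ / 2) ^ k := by
    refine setIntegral_congr_fun measurableSet_Icc fun u hu => ?_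
    rw [gcl]
    rcases hu with ⟨h1, h2⟩
    rw [max_eq_left h1, min_eq_left h2]
  rw [hcong, MeasureTheory.integral_Icc_eq_integral_Ioc,
    ← intervalIntegral.integral_of_le hℓ.le]
  have := intervalIntegral.integral_comp_sub_right (a := 0) (b := ℓ)
    (fun x => x ^ k) (ℓ / 2)
  rw [this, integral_pow]
  have h0 : (0:ℝ) - ℓ / 2 = -(ℓ/2) := by ring
  have h1 : ℓ - ℓ / 2 = ℓ/2 := by ring
  rw [h0, h1]
  ring

lemma gcl_m1 (hℓ : 0 < ℓ) : ∫ u, gcl ℓ u ∂(unif ℓ) = 0 := by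
  have := gcl_pow_integral hℓ 1
  simp only [pow_one] at this
  rw [this]
  ring

lemma gcl_m2 (hℓ : 0 < ℓ) : ∫ u, gcl ℓ u ^ 2 ∂(unif ℓ) = ℓ ^ 2 / 12 := by
  rw [gcl_pow_integral hℓ 2]
  field_simp
  ring

lemma gcl_m4 (hℓ : 0 < ℓ) : ∫ u, gcl ℓ u ^ 4 ∂(unif ℓ) = ℓ ^ 4 / 80 := by
  rw [gcl_pow_integral hℓ 4]
  field_simp
  ring

end unifsec

section pointwise

/-- indicator of `u ≤ t` -/
noncomputable def chi (t u : ℝ) : ℝ := if u ≤ t then 1 else 0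

lemma chi_meas_u (t : ℝ) : Measurable (chi t) := by
  unfold chi
  exact Measurable.ite measurableSet_Iic measurable_const measurable_const

lemma chi_meas_t (u : ℝ) : Measurable (fun t => chi t u) := by
  unfold chi
  exact Measurable.ite measurableSet_Ici measurable_const measurable_const

lemma chi_nonneg (t u : ℝ) : 0 ≤ chi t u := by unfold chi; split_ifs <;> norm_num

lemma chi_le_one (t u : ℝ) : chi t u ≤ 1 := by unfold chi; split_ifs <;> norm_num

lemma chi_sq (t u : ℝ) : chi t u ^ 2 = chi t u := by unfold chi; split_ifs <;> norm_num

lemma abs_eq_integral_chi' {ℓ : ℝ} (hℓ : 0 < ℓ) {a b : ℝ} (ha : a ∈ Icc 0 ℓ)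
    (hb : b ∈ Icc 0 ℓ) (hab : a ≤ b) :
    ∫ t in Ioc 0 ℓ, |chi t a - chi t b| = b - a := by
  have hpt : ∀ t, |chi t a - chi t b| = (Ico a b).indicator (fun _ => (1:ℝ)) t := by
    intro t
    unfold chi
    rcases le_or_gt a t with h1 | h1
    · rcases le_or_gt b t with h2 | h2
      · simp [h1, h2, indicator_apply, not_lt.2 h2]
      · simp [h1, not_le.2 h2, indicator_apply, mem_Ico, h2]
    · have h2 : ¬ b ≤ t := fun h => absurd (le_trans hab h) (not_le.2 h1)
      simp [not_le.2 h1, h2, indicator_apply, mem_Ico, not_le.2 h1]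
  simp_rw [hpt]
  rw [integral_indicator measurableSet_Ico, setIntegral_const,
    measureReal_def, Measure.restrict_apply measurableSet_Ico]
  have hvol : volume (Ico a b ∩ Ioc 0 ℓ) = ENNReal.ofReal (b - a) := by
    apply le_antisymm
    · calc volume (Ico a b ∩ Ioc 0 ℓ) ≤ volume (Icc a b) := by
            apply measure_mono; intro t ⟨ht1, _⟩; exact ⟨ht1.1, ht1.2.le⟩
      _ = ENNReal.ofReal (b - a) := Real.volume_Icc
    · calc ENNReal.ofReal (b - a) = volume (Ioo a b) := Real.volume_Ioo.symm
      _ ≤ volume (Ico a b ∩ Ioc 0 ℓ) := by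
          apply measure_mono
          intro t ⟨ht1, ht2⟩
          exact ⟨⟨ht1.le, ht2⟩, lt_of_le_of_lt ha.1 ht1, le_trans ht2.le hb.2⟩
  rw [hvol, ENNReal.toReal_ofReal (by linarith [hab])]
  simp

lemma abs_eq_integral_chi {ℓ : ℝ} (hℓ : 0 < ℓ) {a b : ℝ} (ha : a ∈ Icc 0 ℓ)
    (hb : b ∈ Icc 0 ℓ) :
    ∫ t in Ioc 0 ℓ, |chi t a - chi t b| = |a - b| := by
  rcases le_total a b with hab | hab
  · rw [abs_eq_integral_chi' hℓ ha hb hab, abs_sub_comm, abs_of_nonneg (by linarith)]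
  · have : ∀ t, |chi t a - chi t b| = |chi t b - chi t a| := fun t => abs_sub_comm _ _
    simp_rw [this]
    rw [abs_eq_integral_chi' hℓ hb ha hab, abs_of_nonneg (by linarith)]

lemma chi_pos_of_sub_pos {t u v : ℝ} (h : 0 < chi t u - chi t v) : u ≤ t ∧ ¬ v ≤ t := by
  unfold chi at h
  split_ifs at h with h1 h2 h2 <;> first | exact ⟨h1, h2⟩ | norm_num at h

lemma abs_sum_chi {n : ℕ} {a b : Fin n → ℝ} (ha : Monotone a) (hb : Monotone b) (t : ℝ) :
    ∑ i, |chi t (a i) - chi t (b i)| = |∑ i, (chi t (a i) - chi t (b i))| := by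
  set d : Fin n → ℝ := fun i => chi t (a i) - chi t (b i) with hd
  by_cases h : ∀ i, 0 ≤ d i
  · rw [abs_of_nonneg (Finset.sum_nonneg fun i _ => h i)]
    exact Finset.sum_congr rfl fun i _ => abs_of_nonneg (h i)
  · push_neg at h
    obtain ⟨j, hj⟩ := h
    have hneg : ∀ i, d i ≤ 0 := by
      intro i
      by_contra hi
      push_neg at hi
      obtain ⟨hai, hbi⟩ := chi_pos_of_sub_pos (hd ▸ hi)
      have hj' : 0 < chi t (b j) - chi t (a j) := by
        have : d j < 0 := hj
        rw [hd] at this; dsimp at this; linarith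
      obtain ⟨hbj, haj⟩ := chi_pos_of_sub_pos hj'
      rcases le_total i j with hij | hij
      · exact hbi (le_trans (hb hij) hbj)
      · exact haj (le_trans (ha hij) hai)
    rw [abs_of_nonpos (Finset.sum_nonpos fun i _ => hneg i), ← Finset.sum_neg_distrib]
    exact Finset.sum_congr rfl fun i _ => abs_of_nonpos (hneg i)

lemma chi_t_integrable {ℓ a b : ℝ} :
    Integrable (fun t => |chi t a - chi t b|) (volume.restrict (Ioc 0 ℓ)) := by
  refine (integrable_const (2:ℝ)).mono'
    (((chi_meas_t a).sub (chi_meas_t b)).abs).aestronglyMeasurable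
    (Filter.Eventually.of_forall fun t => ?_)
  rw [Real.norm_eq_abs, abs_abs]
  have h1 := chi_nonneg t a; have h2 := chi_le_one t a
  have h3 := chi_nonneg t b; have h4 := chi_le_one t b
  rw [abs_sub_le_iff]; constructor <;> linarith

lemma matching_le_integral_chi {ℓ : ℝ} (hℓ : 0 < ℓ) {n : ℕ} (x y : Fin n → ℝ)
    (hx : ∀ i, x i ∈ Icc 0 ℓ) (hy : ∀ i, y i ∈ Icc 0 ℓ) :
    (⨅ σ : Equiv.Perm (Fin n), ∑ i, |x i - y (σ i)|)
      ≤ ∫ t in Ioc 0 ℓ, |∑ i, (chi t (x i) - chi t (y i))| := by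
  set sx := Tuple.sort x
  set sy := Tuple.sort y
  set σ := sy * sx⁻¹ with hσ
  have hbdd : BddBelow (Set.range fun σ : Equiv.Perm (Fin n) => ∑ i, |x i - y (σ i)|) := by
    refine ⟨0, fun v ⟨τ, hτ⟩ => ?_⟩
    rw [← hτ]
    exact Finset.sum_nonneg fun i _ => abs_nonneg _
  refine le_trans (ciInf_le hbdd σ) ?_
  have hre : ∑ i, |x i - y (σ i)| = ∑ j, |x (sx j) - y (sy j)| := by
    rw [← Equiv.sum_comp sx (fun i => |x i - y (σ i)|)]
    apply Finset.sum_congr rfl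
    intro j _
    congr 2
    rw [hσ]
    simp [Equiv.Perm.mul_apply]
  rw [hre]
  have hstep : ∀ j, |x (sx j) - y (sy j)|
      = ∫ t in Ioc 0 ℓ, |chi t (x (sx j)) - chi t (y (sy j))| := fun j =>
    (abs_eq_integral_chi hℓ (hx _) (hy _)).symm
  refine le_of_eq ?_
  calc ∑ j, |x (sx j) - y (sy j)|
      = ∑ j, ∫ t in Ioc 0 ℓ, |chi t (x (sx j)) - chi t (y (sy j))| :=
        Finset.sum_congr rfl fun j _ => hstep j
    _ = ∫ t in Ioc 0 ℓ, ∑ j, |chi t (x (sx j)) - chi t (y (sy j))| :=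
        (integral_finset_sum _ fun j _ => chi_t_integrable).symm
    _ = ∫ t in Ioc 0 ℓ, |∑ j, (chi t (x (sx j)) - chi t (y (sy j)))| := by
        refine integral_congr_ae (Filter.Eventually.of_forall fun t => ?_)
        exact abs_sum_chi (Tuple.monotone_sort x) (Tuple.monotone_sort y) t
    _ = ∫ t in Ioc 0 ℓ, |∑ i, (chi t (x i) - chi t (y i))| := by
        refine integral_congr_ae (Filter.Eventually.of_forall fun t => ?_)
        dsimp only
        congr 1
        rw [Finset.sum_sub_distrib, Finset.sum_sub_distrib]
        congr 1
        · exact Equiv.sum_comp sx (fun i => chi t (x i))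
        · exact Equiv.sum_comp sy (fun i => chi t (y i))

end pointwise

section perT

variable {ℓ : ℝ}

lemma chi_integrable {ν : Measure ℝ} [IsProbabilityMeasure ν] (t : ℝ) :
    Integrable (chi t) ν :=
  integrable_of_bdd (chi_meas_u t).aestronglyMeasurable
    (fun u => by rw [abs_le]; exact ⟨by linarith [chi_nonneg t u], chi_le_one t u⟩)

lemma per_t_bound {ν : Measure ℝ} [IsProbabilityMeasure ν] (n : ℕ) (t : ℝ) :
    ∫ ω : (Fin n → ℝ) × (Fin n → ℝ), |∑ i, (chi t (ω.1 i) - chi t (ω.2 i))|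
        ∂((Measure.pi fun _ : Fin n => ν).prod (Measure.pi fun _ : Fin n => ν))
      ≤ Real.sqrt (n / 2) := by
  set p := ∫ u, chi t u ∂ν with hp
  set g : ℝ → ℝ := fun u => chi t u - p with hgdef
  have hp0 : 0 ≤ p := integral_nonneg fun u => chi_nonneg t u
  have hp1 : p ≤ 1 := by
    have := integral_mono (chi_integrable t (ν := ν)) (integrable_const 1)
      (fun u => chi_le_one t u)
    simpa using this
  have hgm : Measurable g := (chi_meas_u t).sub measurable_const
  have hgb : ∀ u, |g u| ≤ 1 := fun u => by
    rw [hgdef, abs_le]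
    constructor
    · have := chi_nonneg t u; simp only; linarith
    · have := chi_le_one t u; simp only; linarith
  have hg0 : ∫ u, g u ∂ν = 0 := by
    rw [hgdef]
    rw [integral_sub (chi_integrable t) (integrable_const p), integral_const]
    simp [hp]
  have hg2 : ∫ u, g u ^ 2 ∂ν = p - p ^ 2 := by
    have hpt : ∀ u, g u ^ 2 = (1 - 2 * p) * chi t u + p ^ 2 := by
      intro u
      have := chi_sq t u
      rw [hgdef]
      simp only
      nlinarith [chi_sq t u]
    simp_rw [hpt]
    rw [integral_add ((chi_integrable t).const_mul _) (integrable_const _),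
      integral_const_mul, integral_const]
    simp [hp]
    ring
  have hDpt : ∀ ω : (Fin n → ℝ) × (Fin n → ℝ),
      ∑ i, (chi t (ω.1 i) - chi t (ω.2 i)) = Dsum g n ω := by
    intro ω
    rw [Dsum, Wsum, Wsum, hgdef]
    simp only
    rw [Finset.sum_sub_distrib, Finset.sum_sub_distrib, Finset.sum_sub_distrib]
    ring
  simp_rw [hDpt]
  set μn := ((Measure.pi fun _ : Fin n => ν).prod (Measure.pi fun _ : Fin n => ν)) with hμn
  have habs_int : Integrable (fun ω => |Dsum g n ω|) μn :=
    integrable_of_bdd (Dsum_meas hgm n).abs.aestronglyMeasurable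
      (fun ω => by rw [abs_abs]; exact Dsum_bdd hgb n ω)
  have hsq_int : Integrable (fun ω => Dsum g n ω ^ 2) μn :=
    integrable_of_bdd ((Dsum_meas hgm n).pow_const 2).aestronglyMeasurable
      (fun ω => by
        rw [abs_pow]
        calc |Dsum g n ω| ^ 2 ≤ ((2:ℝ) * (n * 1)) ^ 2 :=
          pow_le_pow_left₀ (abs_nonneg _) (Dsum_bdd hgb n ω) 2
        _ = ((2:ℝ) * (n * 1)) ^ 2 := rfl)
  have hA2 : (∫ ω, |Dsum g n ω| ∂μn) ^ 2 ≤ ∫ ω, Dsum g n ω ^ 2 ∂μn := by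
    have hcs := cs_integral (μ := μn) (f := fun ω => |Dsum g n ω|)
      (g := fun _ => (1:ℝ)) (by simpa using habs_int) (by simpa [sq_abs] using hsq_int)
      (by simp)
    simp only [mul_one, sq_abs, one_pow] at hcs
    calc (∫ ω, |Dsum g n ω| ∂μn) ^ 2 ≤ (∫ ω, Dsum g n ω ^ 2 ∂μn) * ∫ (_ : _), (1:ℝ) ∂μn := hcs
    _ = ∫ ω, Dsum g n ω ^ 2 ∂μn := by simp
  have hsqval : ∫ ω, Dsum g n ω ^ 2 ∂μn = 2 * n * (p - p ^ 2) := by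
    rw [hμn, Dsum_sq hgm hgb hg0 n, hg2]
  rw [Real.le_sqrt (integral_nonneg fun ω => abs_nonneg _) (by positivity)]
  rw [hsqval] at hA2
  have : 2 * (n:ℝ) * (p - p ^ 2) ≤ n / 2 := by nlinarith [sq_nonneg (p - 1/2), Nat.cast_nonneg (α := ℝ) n]
  linarith

end perT

lemma unif_Icc {ℓ : ℝ} (hℓ : 0 < ℓ) : unif ℓ (Set.Icc 0 ℓ) = 1 := by
  rw [unif, Measure.smul_apply, Measure.restrict_apply measurableSet_Icc,
    Set.inter_self, Real.volume_Icc, smul_eq_mul, sub_zero,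
    ENNReal.inv_mul_cancel (by simp [hℓ]) ENNReal.ofReal_ne_top]

set_option maxHeartbeats 1000000 in
theorem balanced_market_cost_theta' :
    ∃ C₁ C₂ : ℝ, 0 < C₂ ∧ C₂ ≤ C₁ ∧ ∀ (n : ℕ) (ℓ : ℝ), 1 ≤ n → 0 < ℓ →
      C₂ * ℓ * Real.sqrt n ≤
        (∫ x : (Fin n → ℝ) × (Fin n → ℝ),
          (⨅ σ : Equiv.Perm (Fin n), ∑ i, |x.1 i - x.2 (σ i)|)
          ∂((Measure.pi fun _ => unif ℓ).prod (Measure.pi fun _ => unif ℓ))) ∧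
      (∫ x : (Fin n → ℝ) × (Fin n → ℝ),
          (⨅ σ : Equiv.Perm (Fin n), ∑ i, |x.1 i - x.2 (σ i)|)
          ∂((Measure.pi fun _ => unif ℓ).prod (Measure.pi fun _ => unif ℓ)))
        ≤ C₁ * ℓ * Real.sqrt n := by
  refine ⟨1, 1/5, by norm_num, by norm_num, ?_⟩
  intro n ℓ hn hℓ
  haveI := unif_prob hℓ
  have hn1 : (1:ℝ) ≤ (n:ℝ) := by exact_mod_cast hn
  have hn0 : (0:ℝ) < (n:ℝ) := by linarith
  set μ1 : Measure (Fin n → ℝ) := Measure.pi fun _ => unif ℓ with hμ1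
  set μn := μ1.prod μ1 with hμn
  set A : Set (Fin n → ℝ) := Set.pi Set.univ (fun _ => Set.Icc 0 ℓ) with hA
  have hAm : MeasurableSet A := MeasurableSet.univ_pi fun _ => measurableSet_Icc
  have hA1 : μ1 A = 1 := by
    rw [hμ1, hA, Measure.pi_pi]
    simp [unif_Icc hℓ]
  have hbox : ∀ᵐ ω ∂μn, ω ∈ A ×ˢ A := by
    rw [ae_iff]
    have he : {ω : (Fin n → ℝ) × (Fin n → ℝ) | ¬ ω ∈ A ×ˢ A} = (A ×ˢ A)ᶜ := rfl
    rw [he, prob_compl_eq_zero_iff (hAm.prod hAm), hμn, Measure.prod_prod, hA1, one_mul]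
  set M : (Fin n → ℝ) × (Fin n → ℝ) → ℝ :=
    fun ω => ⨅ σ : Equiv.Perm (Fin n), ∑ i, |ω.1 i - ω.2 (σ i)| with hM
  have hbddM : ∀ ω : (Fin n → ℝ) × (Fin n → ℝ),
      BddBelow (Set.range fun σ : Equiv.Perm (Fin n) => ∑ i, |ω.1 i - ω.2 (σ i)|) := by
    intro ω
    refine ⟨0, fun v ⟨τ, hτ⟩ => ?_⟩
    rw [← hτ]
    exact Finset.sum_nonneg fun i _ => abs_nonneg _
  have hMnn : ∀ ω, 0 ≤ M ω := fun ω =>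
    le_ciInf fun σ => Finset.sum_nonneg fun i _ => abs_nonneg _
  have hMm : Measurable M := by
    refine Measurable.iInf fun σ => Finset.measurable_sum _ fun i _ => ?_
    exact (((measurable_pi_apply i).comp measurable_fst).sub
      ((measurable_pi_apply (σ i)).comp measurable_snd)).abs
  have hMleN : ∀ ω ∈ A ×ˢ A, M ω ≤ n * ℓ := by
    rintro ω ⟨h1, h2⟩
    refine le_trans (ciInf_le (hbddM ω) 1) ?_
    calc ∑ i, |ω.1 i - ω.2 ((1 : Equiv.Perm (Fin n)) i)| ≤ ∑ _i : Fin n, ℓ := by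
          refine Finset.sum_le_sum fun i _ => ?_
          have hx := h1 i (Set.mem_univ i)
          have hy := h2 i (Set.mem_univ i)
          simp only [Equiv.Perm.coe_one, id_eq]
          rw [abs_le]
          constructor <;> [linarith [hx.1, hy.2]; linarith [hx.2, hy.1]]
      _ = n * ℓ := by simp [mul_comm]
  have hMint : Integrable M μn := by
    refine (integrable_const ((n:ℝ) * ℓ)).mono' hMm.aestronglyMeasurable ?_
    filter_upwards [hbox] with ω hω
    rw [Real.norm_eq_abs, abs_of_nonneg (hMnn ω)]
    exact hMleN ω hω
  constructor
  · -- LOWER BOUND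
    have hgb : ∀ u, |gcl ℓ u| ≤ ℓ / 2 := gcl_bdd hℓ
    set D : (Fin n → ℝ) × (Fin n → ℝ) → ℝ := Dsum (gcl ℓ) n with hD
    have hDm : Measurable D := Dsum_meas gcl_meas n
    have hDb : ∀ ω, |D ω| ≤ n * ℓ := fun ω => by
      have := Dsum_bdd hgb n ω
      rw [hD]; nlinarith [this]
    have hDleM : ∀ᵐ ω ∂μn, |D ω| ≤ M ω := by
      filter_upwards [hbox] with ω hω
      obtain ⟨h1, h2⟩ := hω
      refine le_ciInf fun σ => ?_
      have hDeq : D ω = ∑ i, (ω.1 i - ω.2 (σ i)) := by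
        rw [hD, Dsum, Wsum, Wsum]
        have hx : ∀ i, gcl ℓ (ω.1 i) = ω.1 i - ℓ / 2 := fun i => by
          have hm := h1 i (Set.mem_univ i)
          rw [gcl, max_eq_left hm.1, min_eq_left hm.2]
        have hy : ∀ i, gcl ℓ (ω.2 i) = ω.2 i - ℓ / 2 := fun i => by
          have hm := h2 i (Set.mem_univ i)
          rw [gcl, max_eq_left hm.1, min_eq_left hm.2]
        simp_rw [hx, hy]
        rw [Finset.sum_sub_distrib, Finset.sum_sub_distrib, Finset.sum_sub_distrib]
        have : ∑ i, ω.2 (σ i) = ∑ i, ω.2 i := Equiv.sum_comp σ (fun i => ω.2 i)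
        rw [this]
        ring
      rw [hDeq]
      exact Finset.abs_sum_le_sum_abs _ _
    -- integrabilities
    have habs : Integrable (fun ω => |D ω|) μn :=
      integrable_of_bdd hDm.abs.aestronglyMeasurable
        (fun ω => by rw [abs_abs]; exact hDb ω)
    have hDk : ∀ k : ℕ, Integrable (fun ω => |D ω| ^ k) μn := fun k =>
      integrable_of_bdd (hDm.abs.pow_const k).aestronglyMeasurable
        (fun ω => by
          rw [abs_pow, abs_abs]
          exact pow_le_pow_left₀ (abs_nonneg _) (hDb ω) k)
    have hlow1 : ∫ ω, |D ω| ∂μn ≤ ∫ ω, M ω ∂μn := integral_mono_ae habs hMint hDleM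
    set A0 := ∫ ω, |D ω| ∂μn with hA0
    set B0 := ∫ ω, D ω ^ 2 ∂μn with hB0
    set C0 := ∫ ω, D ω ^ 4 ∂μn with hC0
    set E3 := ∫ ω, |D ω| ^ 3 ∂μn with hE3
    have hsq_eq : (fun ω => |D ω| ^ 2) = fun ω => D ω ^ 2 := by
      funext ω; rw [sq_abs]
    have hfour_eq : (fun ω => |D ω| ^ 4) = fun ω => D ω ^ 4 := by
      funext ω; rw [pow_abs, abs_of_nonneg (by positivity : (0:ℝ) ≤ D ω ^ 4)]
    have hB0val : B0 = 2 * n * (ℓ ^ 2 / 12) := by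
      rw [hB0, hμn, hμ1, hD, Dsum_sq gcl_meas hgb (gcl_m1 hℓ) n, gcl_m2 hℓ]
    have hC0val : C0 = 2 * ((n:ℝ) * (ℓ ^ 4 / 80) + 3 * n * (n - 1) * (ℓ ^ 2 / 12) ^ 2)
        + 6 * (n * (ℓ ^ 2 / 12)) ^ 2 := by
      rw [hC0, hμn, hμ1, hD, Dsum_four gcl_meas hgb (gcl_m1 hℓ) n, gcl_m2 hℓ, gcl_m4 hℓ]
    -- Cauchy-Schwarz twice
    have hcs1 : B0 ^ 2 ≤ A0 * E3 := by
      have h := cs_integral (μ := μn) (f := fun ω => Real.sqrt |D ω|)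
        (g := fun ω => |D ω| * Real.sqrt |D ω|)
        (by
          have he : (fun ω => Real.sqrt |D ω| * (|D ω| * Real.sqrt |D ω|))
              = fun ω => D ω ^ 2 := by
            funext ω
            rw [show Real.sqrt |D ω| * (|D ω| * Real.sqrt |D ω|)
                = |D ω| * (Real.sqrt |D ω| * Real.sqrt |D ω|) by ring,
              Real.mul_self_sqrt (abs_nonneg _), ← sq_abs]
            ring
          rw [he]; rw [← hsq_eq]; exact hDk 2)
        (by
          have he : (fun ω => Real.sqrt |D ω| ^ 2) = fun ω => |D ω| := by
            funext ω; rw [Real.sq_sqrt (abs_nonneg _)]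
          rw [he]; exact habs)
        (by
          have he : (fun ω => (|D ω| * Real.sqrt |D ω|) ^ 2) = fun ω => |D ω| ^ 3 := by
            funext ω
            rw [mul_pow, Real.sq_sqrt (abs_nonneg _)]
            ring
          rw [he]; exact hDk 3)
      have he1 : (∫ ω, Real.sqrt |D ω| * (|D ω| * Real.sqrt |D ω|) ∂μn) = B0 := by
        rw [hB0]
        congr 1
        funext ω
        rw [show Real.sqrt |D ω| * (|D ω| * Real.sqrt |D ω|)
            = |D ω| * (Real.sqrt |D ω| * Real.sqrt |D ω|) by ring,
          Real.mul_self_sqrt (abs_nonneg _), ← sq_abs]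
        ring
      have he2 : (∫ ω, Real.sqrt |D ω| ^ 2 ∂μn) = A0 := by
        rw [hA0]; congr 1; funext ω; rw [Real.sq_sqrt (abs_nonneg _)]
      have he3 : (∫ ω, (|D ω| * Real.sqrt |D ω|) ^ 2 ∂μn) = E3 := by
        rw [hE3]; congr 1; funext ω
        rw [mul_pow, Real.sq_sqrt (abs_nonneg _)]; ring
      rw [he1, he2, he3] at h
      exact h
    have hcs2 : E3 ^ 2 ≤ B0 * C0 := by
      have h := cs_integral (μ := μn) (f := fun ω => |D ω|) (g := fun ω => D ω ^ 2)
        (by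
          have he : (fun ω => |D ω| * D ω ^ 2) = fun ω => |D ω| ^ 3 := by
            funext ω; rw [← sq_abs]; ring
          rw [he]; exact hDk 3)
        (hDk 2)
        (by
          have he : (fun ω => (D ω ^ 2) ^ 2) = fun ω => D ω ^ 4 := by
            funext ω; ring
          rw [he]; rw [← hfour_eq]; exact hDk 4)
      have he1 : (∫ ω, |D ω| * D ω ^ 2 ∂μn) = E3 := by
        rw [hE3]; congr 1; funext ω; rw [← sq_abs]; ring
      have he2 : (∫ ω, (D ω ^ 2) ^ 2 ∂μn) = C0 := by
        rw [hC0]; congr 1; funext ω; ring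
      have he3 : (∫ ω, |D ω| ^ 2 ∂μn) = B0 := by
        rw [hB0]
        exact integral_congr_ae (Filter.Eventually.of_forall fun ω => sq_abs (D ω))
      rw [he1, he2, he3] at h
      exact h
    have hA0nn : 0 ≤ A0 := integral_nonneg fun ω => abs_nonneg _
    have hE3nn : 0 ≤ E3 := integral_nonneg fun ω => by positivity
    have hB0pos : 0 < B0 := by rw [hB0val]; positivity
    have hC0le : C0 ≤ 13 / 120 * n ^ 2 * ℓ ^ 4 := by
      rw [hC0val]
      nlinarith [pow_pos hℓ 4, hn1, sq_nonneg ℓ]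
    have key : B0 ^ 3 ≤ A0 ^ 2 * C0 := by
      have e1 : (B0 ^ 2) ^ 2 ≤ (A0 * E3) ^ 2 :=
        pow_le_pow_left₀ (sq_nonneg B0) hcs1 2
      have e3 : A0 ^ 2 * E3 ^ 2 ≤ A0 ^ 2 * (B0 * C0) :=
        mul_le_mul_of_nonneg_left hcs2 (sq_nonneg A0)
      have e4 : B0 ^ 4 ≤ A0 ^ 2 * B0 * C0 := by nlinarith [e1, e3]
      refine le_of_mul_le_mul_left ?_ hB0pos
      calc B0 * B0 ^ 3 = B0 ^ 4 := by ring
        _ ≤ A0 ^ 2 * B0 * C0 := e4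
        _ = B0 * (A0 ^ 2 * C0) := by ring
    have hK : (0:ℝ) < 13 / 120 * n ^ 2 * ℓ ^ 4 := by positivity
    have h5 : B0 ^ 3 ≤ A0 ^ 2 * (13 / 120 * n ^ 2 * ℓ ^ 4) :=
      le_trans key (mul_le_mul_of_nonneg_left hC0le (sq_nonneg A0))
    have h6 : ((n:ℝ) * ℓ ^ 2 / 25) * (13 / 120 * n ^ 2 * ℓ ^ 4) ≤ B0 ^ 3 := by
      rw [hB0val]
      nlinarith [mul_nonneg (pow_nonneg hn0.le 3) (pow_nonneg hℓ.le 6)]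
    have hA0sq : (n:ℝ) * ℓ ^ 2 / 25 ≤ A0 ^ 2 := by
      have := le_trans h6 h5
      exact (mul_le_mul_iff_left₀ hK).mp this
    have hfin : 1 / 5 * ℓ * Real.sqrt n ≤ A0 := by
      have hsq : (1 / 5 * ℓ * Real.sqrt n) ^ 2 = (n:ℝ) * ℓ ^ 2 / 25 := by
        rw [mul_pow, mul_pow, Real.sq_sqrt hn0.le]
        ring
      calc 1 / 5 * ℓ * Real.sqrt n
          = Real.sqrt ((1 / 5 * ℓ * Real.sqrt n) ^ 2) := by
            rw [Real.sqrt_sq (by positivity)]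
        _ ≤ Real.sqrt (A0 ^ 2) := by
            apply Real.sqrt_le_sqrt
            rw [hsq]
            exact hA0sq
        _ = A0 := Real.sqrt_sq hA0nn
    exact le_trans hfin hlow1
  · -- UPPER BOUND
    set fD : ((Fin n → ℝ) × (Fin n → ℝ)) → ℝ → ℝ :=
      fun ω t => |∑ i, (chi t (ω.1 i) - chi t (ω.2 i))| with hfD
    have hFm : Measurable (Function.uncurry fD) := by
      apply Measurable.abs
      apply Finset.measurable_sum
      intro i _
      have h1 : Measurable fun z : ((Fin n → ℝ) × (Fin n → ℝ)) × ℝ => z.1.1 i :=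
        (measurable_pi_apply i).comp (measurable_fst.comp measurable_fst)
      have h2 : Measurable fun z : ((Fin n → ℝ) × (Fin n → ℝ)) × ℝ => z.1.2 i :=
        (measurable_pi_apply i).comp (measurable_snd.comp measurable_fst)
      have hc1 : Measurable fun z : ((Fin n → ℝ) × (Fin n → ℝ)) × ℝ => chi z.2 (z.1.1 i) := by
        unfold chi
        exact Measurable.ite (measurableSet_le h1 measurable_snd)
          measurable_const measurable_const
      have hc2 : Measurable fun z : ((Fin n → ℝ) × (Fin n → ℝ)) × ℝ => chi z.2 (z.1.2 i) := by
        unfold chi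
        exact Measurable.ite (measurableSet_le h2 measurable_snd)
          measurable_const measurable_const
      exact hc1.sub hc2
    have hFb : ∀ z, |Function.uncurry fD z| ≤ 2 * n := by
      intro z
      rw [Function.uncurry, hfD]
      simp only
      rw [abs_abs]
      calc |∑ i, (chi z.2 (z.1.1 i) - chi z.2 (z.1.2 i))|
          ≤ ∑ i : Fin n, |chi z.2 (z.1.1 i) - chi z.2 (z.1.2 i)| :=
            Finset.abs_sum_le_sum_abs _ _
        _ ≤ ∑ _i : Fin n, 2 := by
            refine Finset.sum_le_sum fun i _ => ?_
            rw [abs_sub_le_iff]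
            constructor <;>
              linarith [chi_nonneg z.2 (z.1.1 i), chi_le_one z.2 (z.1.1 i),
                chi_nonneg z.2 (z.1.2 i), chi_le_one z.2 (z.1.2 i)]
        _ = 2 * n := by simp [mul_comm]
    have hFint : Integrable (Function.uncurry fD) (μn.prod (volume.restrict (Set.Ioc 0 ℓ))) :=
      integrable_of_bdd' hFm.aestronglyMeasurable hFb
    have hMle : ∀ᵐ ω ∂μn, M ω ≤ ∫ t in Set.Ioc 0 ℓ, fD ω t := by
      filter_upwards [hbox] with ω hω
      obtain ⟨h1, h2⟩ := hω
      exact matching_le_integral_chi hℓ ω.1 ω.2 (fun i => h1 i (Set.mem_univ i))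
        (fun i => h2 i (Set.mem_univ i))
    have hGint : Integrable (fun ω => ∫ t in Set.Ioc 0 ℓ, fD ω t) μn :=
      hFint.integral_prod_left
    have h2 : ∫ ω, M ω ∂μn ≤ ∫ ω, (∫ t in Set.Ioc 0 ℓ, fD ω t) ∂μn :=
      integral_mono_ae hMint hGint hMle
    have h3 : ∫ ω, (∫ t in Set.Ioc 0 ℓ, fD ω t) ∂μn
        = ∫ t in Set.Ioc 0 ℓ, (∫ ω, fD ω t ∂μn) :=
      integral_integral_swap hFint
    have h4 : ∀ t, ∫ ω, fD ω t ∂μn ≤ Real.sqrt ((n:ℝ) / 2) := fun t => by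
      rw [hfD, hμn, hμ1]
      exact per_t_bound n t
    have h5 : ∫ t in Set.Ioc 0 ℓ, (∫ ω, fD ω t ∂μn)
        ≤ ∫ t in Set.Ioc 0 ℓ, Real.sqrt ((n:ℝ) / 2) := by
      refine integral_mono hFint.integral_prod_right (integrable_const _) h4
    have h6 : ∫ t in Set.Ioc 0 ℓ, Real.sqrt ((n:ℝ) / 2) = ℓ * Real.sqrt ((n:ℝ) / 2) := by
      rw [setIntegral_const, measureReal_def, Real.volume_Ioc, smul_eq_mul, sub_zero,
        ENNReal.toReal_ofReal hℓ.le]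
    have h7 : ℓ * Real.sqrt ((n:ℝ) / 2) ≤ 1 * ℓ * Real.sqrt n := by
      rw [one_mul]
      refine mul_le_mul_of_nonneg_left ?_ hℓ.le
      exact Real.sqrt_le_sqrt (by linarith)
    calc ∫ ω, M ω ∂μn ≤ ∫ t in Set.Ioc 0 ℓ, (∫ ω, fD ω t ∂μn) := h3 ▸ h2
      _ ≤ ∫ t in Set.Ioc 0 ℓ, Real.sqrt ((n:ℝ) / 2) := h5
      _ = ℓ * Real.sqrt ((n:ℝ) / 2) := h6
      _ ≤ 1 * ℓ * Real.sqrt n := h7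


/-- For two independent samples of `n` i.i.d. uniform points on `[0,ℓ]` (riders and
drivers), the expected minimum cost of a perfect matching is `Θ(ℓ√n)`: there are constants
`C₁ ≥ C₂ > 0` such that for all `n ≥ 1` it lies in `[C₂ ℓ √n, C₁ ℓ √n]`. -/
theorem balanced_market_cost_theta :
    ∃ C₁ C₂ : ℝ, 0 < C₂ ∧ C₂ ≤ C₁ ∧ ∀ (n : ℕ) (ℓ : ℝ), 1 ≤ n → 0 < ℓ →
      C₂ * ℓ * Real.sqrt n ≤
        (∫ x : (Fin n → ℝ) × (Fin n → ℝ),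
          (⨅ σ : Equiv.Perm (Fin n), ∑ i, |x.1 i - x.2 (σ i)|)
          ∂((Measure.pi fun _ => unif ℓ).prod (Measure.pi fun _ => unif ℓ))) ∧
      (∫ x : (Fin n → ℝ) × (Fin n → ℝ),
          (⨅ σ : Equiv.Perm (Fin n), ∑ i, |x.1 i - x.2 (σ i)|)
          ∂((Measure.pi fun _ => unif ℓ).prod (Measure.pi fun _ => unif ℓ)))
        ≤ C₁ * ℓ * Real.sqrt n := by
  exact balanced_market_cost_theta'
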